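/- Existence of infinite runs: for every sequence of channel actions σ over Σ and every word x, there exists an infinite sequence of words x = x₀, x₁, x₂, … with xᵢ →^σ x_{i+1} for all i ∈ ℕ if, and only if, pr[σ^k](ε) ⊑ x for every k ∈ ℕ. -/
import Mathlib


open List
/-- `wpow u k` is the word `u` concatenated `k` times. -/
def wpow {β : Type*} (u : List β) (k : ℕ) : List β := (List.replicate k u).flatten

/-- Auxiliary residual operation, working on reversed words. -/
def resAux {α : Type*} [DecidableEq α] : List α → List α → List α
  | xr, [] => xr
  | [], _ :: _ => []
  | a :: xr, b :: vr => if a = b then resAux xr vr else resAux (a :: xr) vr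
termination_by xr vr => vr.length

/-- The residual `x / v`: the prefix of `x` obtained by removing from `x`
its longest suffix that is a subword of `v`. -/
def res {α : Type*} [DecidableEq α] (x v : List α) : List α :=
  (resAux x.reverse v.reverse).reverse

inductive Act (α : Type*) where
  | write : List α → Act α
  | read : List α → Act α

/-- written part -/
def wri {α : Type*} : List (Act α) → List α
  | [] => []
  | Act.write w :: σ => w ++ wri σ
  | Act.read _ :: σ => wri σ

/-- read part -/
def rea {α : Type*} : List (Act α) → List α
  | [] => []
  | Act.write _ :: σ => rea σ
  | Act.read w :: σ => w ++ rea σ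

/-- `pr σ x` : minimal `σ`-predecessor of `x` (processing `σ` right-to-left). -/
def pr {α : Type*} [DecidableEq α] : List (Act α) → List α → List α
  | [], x => x
  | Act.write v :: σ, x => res (pr σ x) v
  | Act.read u :: σ, x => u ++ pr σ x

/-- lossy step for a single channel action -/
def stepAct {α : Type*} : Act α → List α → List α → Prop
  | Act.write w, x, y => y <+ x ++ w
  | Act.read w, x, y => w ++ y <+ x

/-- lossy steps along a sequence of channel actions -/
def steps {α : Type*} : List (Act α) → List α → List α → Prop
  | [], x, y => x = y
  | θ :: σ, x, y => ∃ z, stepAct θ x z ∧ steps σ z y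

/-- `w` is a fractional power of `u` -/
def FracPow {α : Type*} (u w : List α) : Prop := ∃ k : ℕ, w <+: wpow u k

/-- `x ⊖ u` : remainder of `x` after reading the leftmost embedding of `u`. -/
def ominus {α : Type*} [DecidableEq α] : List α → List α → List α
  | x, [] => x
  | [], _ :: _ => []
  | a :: x, b :: u => if a = b then ominus x u else ominus x (b :: u)

/-- `σ` is increasing -/
def Increasing {α : Type*} (σ : List (Act α)) : Prop :=
  0 < (wri σ).length ∧
    wpow (rea σ) (wri σ).length <+ wpow (wri σ) ((wri σ).length - 1)

/- ===== auxiliary lemmas ===== -/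

lemma resAux_sublist_append {α : Type*} [DecidableEq α] (p v : List α) :
    p <+ v ++ resAux p v := by
  induction p, v using resAux.induct with
  | case1 xr => simp [resAux]
  | case2 b vr => simp [resAux]
  | case3 xr b vr ih =>
      rw [resAux, if_pos rfl]; exact (ih.cons₂ b)
  | case4 a xr b vr h ih =>
      rw [resAux, if_neg h]; exact ih.cons b

lemma resAux_sublist {α : Type*} [DecidableEq α] {p v : List α} (x : List α)
    (h : p <+ v ++ x) : resAux p v <+ x := by
  induction p, v using resAux.induct generalizing x with
  | case1 xr => simpa [resAux] using h
  | case2 b vr => simp [resAux]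
  | case3 xr b vr ih =>
      rw [resAux, if_pos rfl]
      apply ih
      rcases (List.sublist_cons_iff).mp h with h' | ⟨r, hr, hr'⟩
      · exact (List.sublist_cons_self b xr).trans h'
      · cases hr; exact hr'
  | case4 a xr b vr hab ih =>
      rw [resAux, if_neg hab]
      apply ih
      rcases (List.sublist_cons_iff).mp h with h' | ⟨r, hr, hr'⟩
      · exact h'
      · cases hr; exact absurd rfl hab

lemma res_sublist_append {α : Type*} [DecidableEq α] (p v : List α) :
    p <+ res p v ++ v := by
  rw [← List.reverse_sublist, List.reverse_append, res, List.reverse_reverse]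
  exact resAux_sublist_append p.reverse v.reverse

lemma res_sublist {α : Type*} [DecidableEq α] {p v x : List α}
    (h : p <+ x ++ v) : res p v <+ x := by
  rw [res, ← List.reverse_sublist, List.reverse_reverse]
  apply resAux_sublist
  rw [← List.reverse_append]
  exact List.reverse_sublist.mpr h

lemma res_mono {α : Type*} [DecidableEq α] {p p' : List α} (v : List α)
    (h : p <+ p') : res p v <+ res p' v :=
  res_sublist (h.trans (res_sublist_append p' v))

lemma pr_mono {α : Type*} [DecidableEq α] (σ : List (Act α)) {y y' : List α}
    (h : y <+ y') : pr σ y <+ pr σ y' := by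
  induction σ with
  | nil => exact h
  | cons θ σ ih =>
      cases θ with
      | write v => exact res_mono v ih
      | read u => exact ih.append_left u

lemma pr_append {α : Type*} [DecidableEq α] (σ₁ σ₂ : List (Act α)) (x : List α) :
    pr (σ₁ ++ σ₂) x = pr σ₁ (pr σ₂ x) := by
  induction σ₁ with
  | nil => rfl
  | cons θ σ ih => cases θ <;> simp [pr, ih]

lemma steps_append {α : Type*} {σ₁ σ₂ : List (Act α)} {x z y : List α}
    (h₁ : steps σ₁ x z) (h₂ : steps σ₂ z y) : steps (σ₁ ++ σ₂) x y := by
  induction σ₁ generalizing x with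
  | nil => cases h₁; exact h₂
  | cons θ σ ih =>
      obtain ⟨w, hw, hws⟩ := h₁
      exact ⟨w, hw, ih hws⟩

/-- soundness: any `σ`-predecessor of `y` is above `pr σ y`. -/
lemma pr_sublist_of_steps {α : Type*} [DecidableEq α] {σ : List (Act α)}
    {x y : List α} (h : steps σ x y) : pr σ y <+ x := by
  induction σ generalizing x with
  | nil => cases h; exact List.Sublist.refl _
  | cons θ σ ih =>
      obtain ⟨z, hz, hzs⟩ := h
      cases θ with
      | write v => exact res_sublist ((ih hzs).trans hz)
      | read u =>
          exact ((ih hzs).append_left u).trans hz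

/-- completeness, weak form. -/
lemma steps_of_pr_sublist {α : Type*} [DecidableEq α] {σ : List (Act α)}
    {x y : List α} (h : pr σ y <+ x) : ∃ z, y <+ z ∧ steps σ x z := by
  induction σ generalizing x with
  | nil => exact ⟨x, h, rfl⟩
  | cons θ σ ih =>
      cases θ with
      | write v =>
          obtain ⟨z, hz, hzs⟩ := ih (List.Sublist.refl (pr σ y))
          exact ⟨z, hz, pr σ y,
            ((res_sublist_append (pr σ y) v).trans (h.append_right v)), hzs⟩
      | read u =>
          obtain ⟨z, hz, hzs⟩ := ih (List.Sublist.refl (pr σ y))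
          exact ⟨z, hz, pr σ y, h, hzs⟩

lemma stepAct_downward {α : Type*} {θ : Act α} {x z y : List α}
    (h : stepAct θ x z) (hy : y <+ z) : stepAct θ x y := by
  cases θ with
  | write v => exact hy.trans h
  | read u => exact (hy.append_left u).trans h

/-- downward closure in the target, for nonempty `σ`. -/
lemma steps_downward {α : Type*} {σ : List (Act α)} {x z y : List α}
    (h : steps σ x z) (hy : y <+ z) (hne : σ ≠ []) : steps σ x y := by
  induction σ generalizing x with
  | nil => exact absurd rfl hne
  | cons θ σ ih =>
      obtain ⟨w, hw, hws⟩ := h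
      cases σ with
      | nil => cases hws; exact ⟨y, stepAct_downward hw hy, rfl⟩
      | cons θ' σ' => exact ⟨w, hw, ih hws (by simp)⟩

lemma wpow_succ {β : Type*} (u : List β) (k : ℕ) :
    wpow u (k + 1) = u ++ wpow u k := by
  simp [wpow, List.replicate_succ]

theorem infinite_run_iff {α : Type*} [DecidableEq α]
    (σ : List (Act α)) (x : List α) :
    (∃ f : ℕ → List α, f 0 = x ∧ ∀ i : ℕ, steps σ (f i) (f (i + 1))) ↔
    (∀ k : ℕ, pr (wpow σ k) [] <+ x) := by
  constructor
  · rintro ⟨f, hf0, hf⟩ k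
    have hsteps : steps (wpow σ k) x (f k) := by
      induction k with
      | zero => simpa [wpow, steps] using hf0.symm
      | succ k ih =>
          have : wpow σ (k + 1) = wpow σ k ++ σ := by
            simp [wpow, List.replicate_succ']
          rw [this]
          exact steps_append ih (hf k)
    exact (pr_mono _ (List.nil_sublist (f k))).trans (pr_sublist_of_steps hsteps)
  · intro h
    rcases eq_or_ne σ [] with rfl | hne
    · exact ⟨fun _ => x, rfl, fun i => rfl⟩
    · -- chain y k := pr (wpow σ k) []
      set y : ℕ → List α := fun k => pr (wpow σ k) [] with hy
      have ychain : ∀ k, y k <+ y (k + 1) := by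
        intro k
        induction k with
        | zero => exact List.nil_sublist _
        | succ k ih =>
            have h1 : y (k+2) = pr σ (y (k+1)) := by
              simp only [hy, wpow_succ, pr_append]
            have h2 : y (k+1) = pr σ (y k) := by
              simp only [hy, wpow_succ, pr_append]
            have h3 : pr σ (y k) <+ pr σ (y (k+1)) := pr_mono σ ih
            rw [← h2, ← h1] at h3
            exact h3
      have ymono : ∀ j k, j ≤ k → y j <+ y k := by
        intro j k hjk
        induction k with
        | zero => cases Nat.le_zero.mp hjk; exact List.Sublist.refl _
        | succ k ih =>
            rcases Nat.lt_or_ge j (k+1) with h' | h'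
            · exact (ih (Nat.lt_succ_iff.mp h')).trans (ychain k)
            · cases le_antisymm hjk h'; exact List.Sublist.refl _
      -- lengths stabilize
      have hbound : ∀ k, (y k).length ≤ x.length := fun k => (h k).length_le
      have : ∃ k, (y (k+1)).length ≤ (y k).length := by
        by_contra hc
        push_neg at hc
        have grow : ∀ k, k ≤ (y k).length := by
          intro k
          induction k with
          | zero => exact Nat.zero_le _
          | succ k ih => exact Nat.lt_of_le_of_lt ih (hc k)
        exact absurd (le_trans (grow (x.length + 1)) (hbound _)) (by omega)
      obtain ⟨K, hK⟩ := this
      have hfix : y (K + 1) = y K :=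
        ((ychain K).eq_of_length (Nat.le_antisymm (ychain K).length_le hK)).symm
      have hfixpr : pr σ (y K) = y K := by
        have : y (K+1) = pr σ (y K) := by simp only [hy, wpow_succ, pr_append]
        rw [← this, hfix]
      -- build the run
      have hstep : ∀ w : List α, pr σ (y K) <+ w → steps σ w (y K) := by
        intro w hw
        obtain ⟨z, hz, hzs⟩ := steps_of_pr_sublist hw
        exact steps_downward hzs hz hne
      refine ⟨fun i => if i = 0 then x else y K, by simp, fun i => ?_⟩
      cases i with
      | zero => simpa using hstep x (by rw [hfixpr]; exact h K)
      | succ i =>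
          simpa using hstep (y K) (by rw [hfixpr])
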